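/- (Vector-valued Schur estimate) Let 𝒳, 𝒴, 𝒵 be Banach spaces with 𝒴 and 𝒵 of finite cotype. Let α(i,j) > 0 for i,j ∈ ℤ satisfy sup_i ∑_j α(i,j) ≲ 1 and sup_j ∑_i α(i,j) ≲ 1. Let T_{i,j} ∈ ℒ(𝒴, 𝒵) be such that the family {α(i,j)^{−1} T_{i,j} : i,j ∈ ℤ} is R-bounded with R-bound ≲ 1, and let D_i ∈ ℒ(𝒳, 𝒴) satisfy E‖∑_i ε_i D_i x‖_𝒴 ≲ ‖x‖_𝒳 for all x. Then E‖∑_{i,j} ε_j T_{i,j} D_i x‖_𝒵 ≲ ‖x‖_𝒳 for all x ∈ 𝒳. -/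

import Mathlib

noncomputable section

/-- Expectation `E‖∑_{i∈s} ε_i f i‖` over independent random signs indexed by `s`. -/
def radE {ι X : Type*} [DecidableEq ι] [NormedAddCommGroup X]
    (s : Finset ι) (f : ι → X) : ℝ :=
  ((2 : ℝ) ^ s.card)⁻¹ *
    ∑ σ : {i // i ∈ s} → Bool, ‖∑ i : {i // i ∈ s}, (if σ i then f i.1 else - f i.1)‖

section RadELemmas

variable {ι κ X : Type*} [DecidableEq ι] [DecidableEq κ] [NormedAddCommGroup X]

lemma radE_nonneg (s : Finset ι) (f : ι → X) : 0 ≤ radE s f := by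
  unfold radE
  exact mul_nonneg (inv_nonneg.2 (pow_nonneg (by norm_num) _))
    (Finset.sum_nonneg fun _ _ => norm_nonneg _)

lemma radE_reindex (s : Finset ι) (t : Finset κ) (e : {i // i ∈ s} ≃ {k // k ∈ t})
    (f : ι → X) (g : κ → X) (hfg : ∀ i : {i // i ∈ s}, f i.1 = g (e i).1) :
    radE s f = radE t g := by
  unfold radE
  have hcard : s.card = t.card := by
    rw [← Fintype.card_coe s, ← Fintype.card_coe t]
    exact Fintype.card_congr e
  rw [hcard]
  congr 1
  apply Fintype.sum_equiv (Equiv.arrowCongr e (Equiv.refl Bool))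
  intro σ
  congr 1
  apply Fintype.sum_equiv e
  intro i
  simp only [Equiv.arrowCongr_apply, Equiv.refl_apply, Function.comp_apply,
    Equiv.symm_apply_apply, hfg i]

lemma radE_congr (s : Finset ι) (f g : ι → X) (h : ∀ i ∈ s, f i = g i) :
    radE s f = radE s g :=
  radE_reindex s s (Equiv.refl _) f g fun i => h i.1 i.2

lemma radE_map (s : Finset ι) (t : Finset κ) (g : ι → κ) (hmem : ∀ i ∈ s, g i ∈ t)
    (hinj : ∀ i₁ ∈ s, ∀ i₂ ∈ s, g i₁ = g i₂ → i₁ = i₂)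
    (hsurj : ∀ k ∈ t, ∃ i ∈ s, g i = k)
    (f : ι → X) (h : κ → X) (hfh : ∀ i ∈ s, f i = h (g i)) : radE s f = radE t h := by
  have hbij : Function.Bijective
      (fun i : {i // i ∈ s} => (⟨g i.1, hmem i.1 i.2⟩ : {k // k ∈ t})) := by
    constructor
    · intro a b hab
      exact Subtype.ext (hinj a.1 a.2 b.1 b.2 (congrArg Subtype.val hab))
    · rintro ⟨k, hk⟩
      obtain ⟨i, hi, rfl⟩ := hsurj k hk
      exact ⟨⟨i, hi⟩, rfl⟩
  exact radE_reindex s t (Equiv.ofBijective _ hbij) f h fun i => hfh i.1 i.2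

lemma radE_smul [NormedSpace ℝ X] (s : Finset ι) (c : ℝ) (f : ι → X) :
    radE s (fun i => c • f i) = |c| * radE s f := by
  unfold radE
  rw [mul_left_comm]
  congr 1
  rw [Finset.mul_sum]
  apply Finset.sum_congr rfl
  intro σ _
  rw [← Real.norm_eq_abs, ← norm_smul, Finset.smul_sum]
  congr 1
  apply Finset.sum_congr rfl
  intro i _
  split <;> simp [smul_neg]

lemma radE_add_le (s : Finset ι) (f g : ι → X) :
    radE s (fun i => f i + g i) ≤ radE s f + radE s g := by
  unfold radE
  rw [← mul_add]
  apply mul_le_mul_of_nonneg_left _ (inv_nonneg.2 (pow_nonneg (by norm_num) _))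
  rw [← Finset.sum_add_distrib]
  apply Finset.sum_le_sum
  intro σ _
  have : ∀ i : {i // i ∈ s}, (if σ i then f i.1 + g i.1 else -(f i.1 + g i.1))
      = (if σ i then f i.1 else -f i.1) + (if σ i then g i.1 else -g i.1) := by
    intro i; split <;> [rfl; rw [neg_add]]
  rw [Finset.sum_congr rfl fun i _ => this i, Finset.sum_add_distrib]
  exact norm_add_le _ _

lemma radE_zero (s : Finset ι) : radE s (fun _ => (0 : X)) = 0 := by
  simp [radE]

lemma radE_sum_le (s : Finset ι) (t : Finset κ) (F : κ → ι → X) :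
    radE s (fun i => ∑ m ∈ t, F m i) ≤ ∑ m ∈ t, radE s (F m) := by
  classical
  induction t using Finset.induction_on with
  | empty => simp [radE_zero]
  | insert a t ha ih =>
    simp only [Finset.sum_insert ha]
    calc radE s (fun i => F a i + ∑ m ∈ t, F m i)
        ≤ radE s (F a) + radE s (fun i => ∑ m ∈ t, F m i) := radE_add_le _ _ _
      _ ≤ radE s (F a) + ∑ m ∈ t, radE s (F m) := by linarith

lemma radE_insert_zero (s : Finset ι) (a : ι) (ha : a ∉ s) (f : ι → X) (hfa : f a = 0) :
    radE (insert a s) f = radE s f := by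
  classical
  unfold radE
  rw [Finset.card_insert_of_notMem ha]
  set eo := Finset.subtypeInsertEquivOption ha with heo
  have hinner : ∀ σ : {i // i ∈ insert a s} → Bool,
      ‖∑ i : {i // i ∈ insert a s}, (if σ i then f i.1 else -f i.1)‖
      = ‖∑ i : {i // i ∈ s}, (if σ (eo.symm (some i)) then f i.1 else -f i.1)‖ := by
    intro σ
    congr 1
    rw [← Equiv.sum_comp eo.symm
      (fun i : {i // i ∈ insert a s} => if σ i then f i.1 else -f i.1), Fintype.sum_option]
    have h0 : ((eo.symm none : {i // i ∈ insert a s}) : ι) = a := rfl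
    have hz : (if σ (eo.symm none) then f (eo.symm none : {i // i ∈ insert a s}).1 else
        -f (eo.symm none : {i // i ∈ insert a s}).1) = 0 := by
      rw [h0, hfa]; split <;> simp
    rw [hz, zero_add]
    apply Finset.sum_congr rfl
    intro i _
    rfl
  calc ((2:ℝ) ^ (s.card + 1))⁻¹ *
        ∑ σ : {i // i ∈ insert a s} → Bool,
          ‖∑ i : {i // i ∈ insert a s}, (if σ i then f i.1 else -f i.1)‖
      = ((2:ℝ) ^ (s.card + 1))⁻¹ *
        ∑ σ : {i // i ∈ insert a s} → Bool,
          ‖∑ i : {i // i ∈ s}, (if σ (eo.symm (some i)) then f i.1 else -f i.1)‖ := by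
        rw [Finset.sum_congr rfl fun σ _ => hinner σ]
    _ = ((2:ℝ) ^ (s.card + 1))⁻¹ * ∑ p : Bool × ({i // i ∈ s} → Bool),
          ‖∑ i : {i // i ∈ s}, (if p.2 i then f i.1 else -f i.1)‖ := by
        congr 1
        apply Fintype.sum_equiv
          ((Equiv.arrowCongr eo (Equiv.refl Bool)).trans
            (Equiv.piOptionEquivProd (β := fun _ => Bool)))
        intro σ
        rfl
    _ = ((2:ℝ) ^ (s.card + 1))⁻¹ * (2 * ∑ τ : {i // i ∈ s} → Bool,
          ‖∑ i : {i // i ∈ s}, (if τ i then f i.1 else -f i.1)‖) := by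
        rw [Fintype.sum_prod_type, Fintype.sum_bool, two_mul]
    _ = ((2:ℝ) ^ s.card)⁻¹ *
          ∑ τ : {i // i ∈ s} → Bool, ‖∑ i : {i // i ∈ s}, (if τ i then f i.1 else -f i.1)‖ := by
        rw [pow_succ, mul_inv]
        ring

lemma radE_drop (s t : Finset ι) (hst : s ⊆ t) (f : ι → X)
    (hf : ∀ i ∈ t, i ∉ s → f i = 0) : radE t f = radE s f := by
  classical
  have aux : ∀ d : Finset ι, (∀ a ∈ d, f a = 0) → Disjoint s d → radE (s ∪ d) f = radE s f := by
    intro d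
    induction d using Finset.induction_on with
    | empty => intro _ _; rw [Finset.union_empty]
    | insert a d had ih =>
      intro hz hdisj
      have ha' : a ∉ s ∪ d := by
        simp only [Finset.mem_union, not_or]
        exact ⟨fun h => (Finset.disjoint_left.1 hdisj h (Finset.mem_insert_self a d)), had⟩
      rw [Finset.union_insert, radE_insert_zero (s ∪ d) a ha' f (hz a (Finset.mem_insert_self a d)),
        ih (fun b hb => hz b (Finset.mem_insert_of_mem hb))
          (Finset.disjoint_of_subset_right (Finset.subset_insert a d) hdisj)]
  have h1 : t = s ∪ (t \ s) := by rw [Finset.union_sdiff_of_subset hst]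
  rw [h1, aux (t \ s) (fun b hb => hf b (Finset.mem_sdiff.1 hb).1 (Finset.mem_sdiff.1 hb).2)
    Finset.disjoint_sdiff]

end RadELemmas

/-! ### Auxiliary constructions for the Schur estimate -/

/-- The matching (if any) produced by a permutation of `{i ∈ I} ⊕ {j ∈ J}` at column `j`. -/
def schurPick (I J : Finset ℤ) (σ : Equiv.Perm ({i // i ∈ I} ⊕ {j // j ∈ J})) (j : ℤ) :
    Option {i // i ∈ I} :=
  if hj : j ∈ J then
    Sum.elim (fun i => some i) (fun _ => none) (σ.symm (Sum.inr ⟨j, hj⟩))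
  else none

/-- The selected row index for column `j` (or a junk value `0`). -/
def schurIdx (I J : Finset ℤ) (σ : Equiv.Perm ({i // i ∈ I} ⊕ {j // j ∈ J})) (j : ℤ) : ℤ :=
  ((schurPick I J σ j).map (fun i => (i : ℤ))).getD 0

/-- The vector family fed into the `R`-boundedness assumption. -/
def schurY {𝒴 : Type*} [NormedAddCommGroup 𝒴] [NormedSpace ℝ 𝒴]
    (I J : Finset ℤ) (σ : Equiv.Perm ({i // i ∈ I} ⊕ {j // j ∈ J})) (c : ℝ)
    (w : ℤ → 𝒴) (j : ℤ) : 𝒴 :=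
  ((schurPick I J σ j).map (fun i => c • w (i : ℤ))).getD 0

/-- The padded doubly stochastic matrix. -/
def schurM (α : ℤ → ℤ → ℝ) (A : ℝ) (I J : Finset ℤ) :
    Matrix ({i // i ∈ I} ⊕ {j // j ∈ J}) ({i // i ∈ I} ⊕ {j // j ∈ J}) ℝ :=
  fun p q =>
    match p, q with
    | Sum.inl i, Sum.inl i' => if i = i' then 1 - (∑ j ∈ J, α i.1 j) / A else 0
    | Sum.inl i, Sum.inr jq => α i.1 jq.1 / A
    | Sum.inr jp, Sum.inl i' => α i'.1 jp.1 / A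
    | Sum.inr jp, Sum.inr j' => if jp = j' then 1 - (∑ i ∈ I, α i jp.1) / A else 0

lemma schurM_ll (α : ℤ → ℤ → ℝ) (A : ℝ) (I J : Finset ℤ) (i i' : {i // i ∈ I}) :
    schurM α A I J (Sum.inl i) (Sum.inl i') = if i = i' then 1 - (∑ j ∈ J, α i.1 j) / A else 0 :=
  rfl

lemma schurM_lr (α : ℤ → ℤ → ℝ) (A : ℝ) (I J : Finset ℤ) (i : {i // i ∈ I}) (jq : {j // j ∈ J}) :
    schurM α A I J (Sum.inl i) (Sum.inr jq) = α i.1 jq.1 / A := rfl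

lemma schurM_rl (α : ℤ → ℤ → ℝ) (A : ℝ) (I J : Finset ℤ) (jp : {j // j ∈ J}) (i' : {i // i ∈ I}) :
    schurM α A I J (Sum.inr jp) (Sum.inl i') = α i'.1 jp.1 / A := rfl

lemma schurM_rr (α : ℤ → ℤ → ℝ) (A : ℝ) (I J : Finset ℤ) (jp j' : {j // j ∈ J}) :
    schurM α A I J (Sum.inr jp) (Sum.inr j') = if jp = j' then 1 - (∑ i ∈ I, α i jp.1) / A else 0 :=
  rfl

open Finset in
lemma schurM_mem_doublyStochastic (α : ℤ → ℤ → ℝ) (hαpos : ∀ i j, 0 < α i j)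
    (A : ℝ) (hA0 : 0 < A)
    (hα₁ : ∀ i, ∀ J : Finset ℤ, ∑ j ∈ J, α i j ≤ A)
    (hα₂ : ∀ j, ∀ I : Finset ℤ, ∑ i ∈ I, α i j ≤ A)
    (I J : Finset ℤ) :
    schurM α A I J ∈ doublyStochastic ℝ ({i // i ∈ I} ⊕ {j // j ∈ J}) := by
  rw [mem_doublyStochastic_iff_sum]
  refine ⟨?_, ?_, ?_⟩
  · rintro (i | jp) (i' | j')
    · rw [schurM_ll]
      split
      · have h1 : (∑ j ∈ J, α i.1 j) / A ≤ 1 := (div_le_one hA0).2 (hα₁ i.1 J)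
        linarith
      · exact le_refl 0
    · rw [schurM_lr]; exact div_nonneg (hαpos _ _).le hA0.le
    · rw [schurM_rl]; exact div_nonneg (hαpos _ _).le hA0.le
    · rw [schurM_rr]
      split
      · have h1 : (∑ i ∈ I, α i jp.1) / A ≤ 1 := (div_le_one hA0).2 (hα₂ jp.1 I)
        linarith
      · exact le_refl 0
  · rintro (i | jp)
    · rw [Fintype.sum_sum_type]
      have h1 : ∑ i' : {i // i ∈ I}, schurM α A I J (Sum.inl i) (Sum.inl i')
          = 1 - (∑ j ∈ J, α i.1 j) / A := by
        simp only [schurM_ll]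
        simp
      have h2 : ∑ jq : {j // j ∈ J}, schurM α A I J (Sum.inl i) (Sum.inr jq)
          = (∑ j ∈ J, α i.1 j) / A := by
        simp only [schurM_lr]
        calc ∑ jq : {j // j ∈ J}, α i.1 jq.1 / A
            = ∑ j ∈ J, α i.1 j / A := Finset.sum_coe_sort J (fun j => α i.1 j / A)
          _ = (∑ j ∈ J, α i.1 j) / A := by rw [Finset.sum_div]
      rw [h1, h2]; ring
    · rw [Fintype.sum_sum_type]
      have h1 : ∑ i' : {i // i ∈ I}, schurM α A I J (Sum.inr jp) (Sum.inl i')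
          = (∑ i ∈ I, α i jp.1) / A := by
        simp only [schurM_rl]
        calc ∑ i' : {i // i ∈ I}, α i'.1 jp.1 / A
            = ∑ i ∈ I, α i jp.1 / A := Finset.sum_coe_sort I (fun i => α i jp.1 / A)
          _ = (∑ i ∈ I, α i jp.1) / A := by rw [Finset.sum_div]
      have h2 : ∑ j' : {j // j ∈ J}, schurM α A I J (Sum.inr jp) (Sum.inr j')
          = 1 - (∑ i ∈ I, α i jp.1) / A := by
        simp only [schurM_rr]
        simp
      rw [h1, h2]; ring
  · rintro (i' | j')
    · rw [Fintype.sum_sum_type]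
      have h1 : ∑ i : {i // i ∈ I}, schurM α A I J (Sum.inl i) (Sum.inl i')
          = 1 - (∑ j ∈ J, α i'.1 j) / A := by
        simp only [schurM_ll]
        rw [Finset.sum_ite_eq' Finset.univ i'
          (fun i => 1 - (∑ j ∈ J, α i.1 j) / A)]
        simp
      have h2 : ∑ jp : {j // j ∈ J}, schurM α A I J (Sum.inr jp) (Sum.inl i')
          = (∑ j ∈ J, α i'.1 j) / A := by
        simp only [schurM_rl]
        calc ∑ jp : {j // j ∈ J}, α i'.1 jp.1 / A
            = ∑ j ∈ J, α i'.1 j / A := Finset.sum_coe_sort J (fun j => α i'.1 j / A)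
          _ = (∑ j ∈ J, α i'.1 j) / A := by rw [Finset.sum_div]
      rw [h1, h2]; ring
    · rw [Fintype.sum_sum_type]
      have h1 : ∑ i : {i // i ∈ I}, schurM α A I J (Sum.inl i) (Sum.inr j')
          = (∑ i ∈ I, α i j'.1) / A := by
        simp only [schurM_lr]
        calc ∑ i : {i // i ∈ I}, α i.1 j'.1 / A
            = ∑ i ∈ I, α i j'.1 / A := Finset.sum_coe_sort I (fun i => α i j'.1 / A)
          _ = (∑ i ∈ I, α i j'.1) / A := by rw [Finset.sum_div]
      have h2 : ∑ jp : {j // j ∈ J}, schurM α A I J (Sum.inr jp) (Sum.inr j')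
          = 1 - (∑ i ∈ I, α i j'.1) / A := by
        simp only [schurM_rr]
        rw [Finset.sum_ite_eq' Finset.univ j'
          (fun jp => 1 - (∑ i ∈ I, α i jp.1) / A)]
        simp
      rw [h1, h2]; ring

open Finset in
lemma schur_key {𝒴 𝒵 : Type*} [NormedAddCommGroup 𝒴] [NormedSpace ℝ 𝒴]
    [NormedAddCommGroup 𝒵] [NormedSpace ℝ 𝒵]
    (α : ℤ → ℤ → ℝ) (hαpos : ∀ i j, 0 < α i j)
    (A : ℝ) (hA0 : 0 < A)
    (hα₁ : ∀ i, ∀ J : Finset ℤ, ∑ j ∈ J, α i j ≤ A)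
    (hα₂ : ∀ j, ∀ I : Finset ℤ, ∑ i ∈ I, α i j ≤ A)
    (T : ℤ → ℤ → 𝒴 →L[ℝ] 𝒵)
    (CR : ℝ) (hCR : 0 ≤ CR)
    (hR : ∀ (N : ℕ) (idx : Fin N → ℤ × ℤ) (y : Fin N → 𝒴),
      radE Finset.univ (fun j => (α (idx j).1 (idx j).2)⁻¹ • T (idx j).1 (idx j).2 (y j))
        ≤ CR * radE Finset.univ y)
    (w : ℤ → 𝒴) (CDx : ℝ) (hCDx : 0 ≤ CDx)
    (hw : ∀ I' : Finset ℤ, radE I' w ≤ CDx)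
    (I J : Finset ℤ) :
    radE J (fun j => ∑ i ∈ I, T i j (w i)) ≤ A * CR * CDx := by
  classical
  obtain ⟨wt, hwt0, hwt1, hwtM⟩ :=
    exists_eq_sum_perm_of_mem_doublyStochastic
      (schurM_mem_doublyStochastic α hαpos A hA0 hα₁ hα₂ I J)
  -- the family associated to each permutation
  set G : Equiv.Perm ({i // i ∈ I} ⊕ {j // j ∈ J}) → ℤ → 𝒵 :=
    fun σ j => (α (schurIdx I J σ j) j)⁻¹ •
      T (schurIdx I J σ j) j (schurY I J σ (A * wt σ) w j) with hG
  -- Birkhoff entry identity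
  have hentry : ∀ (ia : {i // i ∈ I}) (ja : {j // j ∈ J}),
      (∑ σ : Equiv.Perm ({i // i ∈ I} ⊕ {j // j ∈ J}),
        (if σ (Sum.inl ia) = Sum.inr ja then wt σ else 0)) = α ia.1 ja.1 / A := by
    intro ia ja
    have h := congrFun (congrFun hwtM (Sum.inl ia)) (Sum.inr ja)
    rw [Matrix.sum_apply] at h
    simp only [Matrix.smul_apply, Equiv.Perm.permMatrix, PEquiv.toMatrix_apply,
      Equiv.toPEquiv_apply, Option.mem_def, Option.some.injEq, smul_eq_mul, mul_ite, mul_one,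
      mul_zero, schurM_lr] at h
    exact h
  -- basic facts about schurPick
  have hpick_some : ∀ (σ : Equiv.Perm ({i // i ∈ I} ⊕ {j // j ∈ J})) (j : ℤ) (hj : j ∈ J)
      (ia : {i // i ∈ I}), schurPick I J σ j = some ia →
      σ.symm (Sum.inr ⟨j, hj⟩) = Sum.inl ia := by
    intro σ j hj ia h
    unfold schurPick at h
    rw [dif_pos hj] at h
    rcases hc2 : σ.symm (Sum.inr (⟨j, hj⟩ : {j' // j' ∈ J})) with i' | j'
    · rw [hc2] at h
      simp only [Sum.elim_inl, Option.some.injEq] at h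
      rw [h]
    · rw [hc2] at h
      simp at h
  -- pointwise decomposition
  have hdec : ∀ j ∈ J, (∑ i ∈ I, T i j (w i))
      = ∑ σ : Equiv.Perm ({i // i ∈ I} ⊕ {j // j ∈ J}), G σ j := by
    intro j hj
    have hGσ : ∀ σ : Equiv.Perm ({i // i ∈ I} ⊕ {j // j ∈ J}),
        G σ j = ∑ ia : {i // i ∈ I},
          (if σ.symm (Sum.inr (⟨j, hj⟩ : {j' // j' ∈ J})) = Sum.inl ia then
            (A * wt σ) • ((α ia.1 j)⁻¹ • T ia.1 j (w ia.1)) else 0) := by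
      intro σ
      rcases hc : σ.symm (Sum.inr (⟨j, hj⟩ : {j' // j' ∈ J})) with i0 | j'
      · have hp : schurPick I J σ j = some i0 := by
          unfold schurPick
          rw [dif_pos hj, hc]
          rfl
        have hidx : schurIdx I J σ j = i0.1 := by
          unfold schurIdx; rw [hp]; rfl
        have hy : schurY I J σ (A * wt σ) w j = (A * wt σ) • w i0.1 := by
          unfold schurY; rw [hp]; rfl
        rw [Finset.sum_eq_single_of_mem i0 (Finset.mem_univ _)]
        · rw [if_pos rfl]
          show (α (schurIdx I J σ j) j)⁻¹ •
              T (schurIdx I J σ j) j (schurY I J σ (A * wt σ) w j) = _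
          rw [hidx, hy, map_smul]
          exact smul_comm _ _ _
        · intro ia _ hne
          rw [if_neg (fun h => hne (Sum.inl.inj h).symm)]
      · have hp : schurPick I J σ j = none := by
          unfold schurPick
          rw [dif_pos hj, hc]
          rfl
        have hy : schurY I J σ (A * wt σ) w j = 0 := by
          unfold schurY; rw [hp]; rfl
        have hz : G σ j = 0 := by
          show (α (schurIdx I J σ j) j)⁻¹ •
              T (schurIdx I J σ j) j (schurY I J σ (A * wt σ) w j) = 0
          rw [hy, map_zero, smul_zero]
        rw [hz, Finset.sum_eq_zero]
        intro ia _
        rw [if_neg (by simp)]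
    have hia : ∀ ia : {i // i ∈ I},
        (∑ σ : Equiv.Perm ({i // i ∈ I} ⊕ {j // j ∈ J}),
          (if σ.symm (Sum.inr (⟨j, hj⟩ : {j' // j' ∈ J})) = Sum.inl ia then
            (A * wt σ) • ((α ia.1 j)⁻¹ • T ia.1 j (w ia.1)) else 0))
        = T ia.1 j (w ia.1) := by
      intro ia
      have hcond : ∀ σ : Equiv.Perm ({i // i ∈ I} ⊕ {j // j ∈ J}),
          (σ.symm (Sum.inr (⟨j, hj⟩ : {j' // j' ∈ J})) = Sum.inl ia)
          ↔ (σ (Sum.inl ia) = Sum.inr (⟨j, hj⟩ : {j' // j' ∈ J})) := by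
        intro σ
        rw [Equiv.symm_apply_eq, eq_comm]
      calc (∑ σ : Equiv.Perm ({i // i ∈ I} ⊕ {j // j ∈ J}),
            (if σ.symm (Sum.inr (⟨j, hj⟩ : {j' // j' ∈ J})) = Sum.inl ia then
              (A * wt σ) • ((α ia.1 j)⁻¹ • T ia.1 j (w ia.1)) else 0))
          = ∑ σ : Equiv.Perm ({i // i ∈ I} ⊕ {j // j ∈ J}),
            (if σ (Sum.inl ia) = Sum.inr (⟨j, hj⟩ : {j' // j' ∈ J}) then (A * wt σ) else 0) •
              ((α ia.1 j)⁻¹ • T ia.1 j (w ia.1)) := by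
            apply Finset.sum_congr rfl
            intro σ _
            rw [ite_smul, zero_smul]
            simp only [hcond]
        _ = (∑ σ : Equiv.Perm ({i // i ∈ I} ⊕ {j // j ∈ J}),
              (if σ (Sum.inl ia) = Sum.inr (⟨j, hj⟩ : {j' // j' ∈ J}) then (A * wt σ) else 0)) •
              ((α ia.1 j)⁻¹ • T ia.1 j (w ia.1)) := by rw [Finset.sum_smul]
        _ = (A * (α ia.1 j / A)) • ((α ia.1 j)⁻¹ • T ia.1 j (w ia.1)) := by
            congr 1
            rw [← hentry ia ⟨j, hj⟩, Finset.mul_sum]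
            apply Finset.sum_congr rfl
            intro σ _
            rw [mul_ite, mul_zero]
        _ = T ia.1 j (w ia.1) := by
            rw [mul_comm, div_mul_cancel₀ _ hA0.ne', smul_inv_smul₀ (hαpos ia.1 j).ne']
    calc (∑ i ∈ I, T i j (w i))
        = ∑ ia : {i // i ∈ I}, T ia.1 j (w ia.1) := (Finset.sum_coe_sort I _).symm
      _ = ∑ ia : {i // i ∈ I}, ∑ σ : Equiv.Perm ({i // i ∈ I} ⊕ {j // j ∈ J}),
            (if σ.symm (Sum.inr (⟨j, hj⟩ : {j' // j' ∈ J})) = Sum.inl ia then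
              (A * wt σ) • ((α ia.1 j)⁻¹ • T ia.1 j (w ia.1)) else 0) :=
          Finset.sum_congr rfl fun ia _ => (hia ia).symm
      _ = ∑ σ : Equiv.Perm ({i // i ∈ I} ⊕ {j // j ∈ J}), ∑ ia : {i // i ∈ I},
            (if σ.symm (Sum.inr (⟨j, hj⟩ : {j' // j' ∈ J})) = Sum.inl ia then
              (A * wt σ) • ((α ia.1 j)⁻¹ • T ia.1 j (w ia.1)) else 0) := Finset.sum_comm
      _ = ∑ σ : Equiv.Perm ({i // i ∈ I} ⊕ {j // j ∈ J}), G σ j :=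
          Finset.sum_congr rfl fun σ _ => (hGσ σ).symm
  -- per-permutation estimate
  have hper : ∀ σ : Equiv.Perm ({i // i ∈ I} ⊕ {j // j ∈ J}),
      radE J (G σ) ≤ CR * ((A * wt σ) * CDx) := by
    intro σ
    let e : {j // j ∈ J} ≃ Fin J.card := Fintype.equivFinOfCardEq (Fintype.card_coe J)
    let e' : {p // p ∈ (Finset.univ : Finset (Fin J.card))} ≃ {j // j ∈ J} :=
      (Equiv.subtypeUnivEquiv (fun p => Finset.mem_univ p)).trans e.symm
    have h1 := hR J.card (fun p => (schurIdx I J σ ((e.symm p : {j // j ∈ J}) : ℤ),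
        ((e.symm p : {j // j ∈ J}) : ℤ)))
      (fun p => schurY I J σ (A * wt σ) w ((e.symm p : {j // j ∈ J}) : ℤ))
    have hL : radE (Finset.univ : Finset (Fin J.card))
        (fun p => (α (schurIdx I J σ ((e.symm p : {j // j ∈ J}) : ℤ))
            ((e.symm p : {j // j ∈ J}) : ℤ))⁻¹ •
          T (schurIdx I J σ ((e.symm p : {j // j ∈ J}) : ℤ)) ((e.symm p : {j // j ∈ J}) : ℤ)
            (schurY I J σ (A * wt σ) w ((e.symm p : {j // j ∈ J}) : ℤ)))
        = radE J (G σ) :=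
      radE_reindex _ _ e' _ _ (fun p => rfl)
    have hLy : radE (Finset.univ : Finset (Fin J.card))
        (fun p => schurY I J σ (A * wt σ) w ((e.symm p : {j // j ∈ J}) : ℤ))
        = radE J (schurY I J σ (A * wt σ) w) :=
      radE_reindex _ _ e' _ _ (fun p => rfl)
    set dom := J.filter (fun j => (schurPick I J σ j).isSome = true) with hdomdef
    set img := dom.image (schurIdx I J σ) with himgdef
    have hdomJ : dom ⊆ J := Finset.filter_subset _ _
    have hzero : ∀ j ∈ J, j ∉ dom → schurY I J σ (A * wt σ) w j = 0 := by
      intro j hjJ hjd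
      have hns : ¬ ((schurPick I J σ j).isSome = true) := by
        intro hs; exact hjd (Finset.mem_filter.2 ⟨hjJ, hs⟩)
      have hnone : schurPick I J σ j = none := Option.not_isSome_iff_eq_none.1 hns
      unfold schurY; rw [hnone]; rfl
    have hpick_dom : ∀ j ∈ dom, ∃ ia, schurPick I J σ j = some ia := by
      intro j hjd
      exact Option.isSome_iff_exists.1 (Finset.mem_filter.1 hjd).2
    have e1 : radE J (schurY I J σ (A * wt σ) w) = radE dom (schurY I J σ (A * wt σ) w) :=
      radE_drop dom J hdomJ _ hzero
    have e2 : radE dom (schurY I J σ (A * wt σ) w)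
        = radE img (fun i => (A * wt σ) • w i) := by
      apply radE_map
      · intro j hj; exact Finset.mem_image_of_mem _ hj
      · intro j₁ hj₁ j₂ hj₂ heq
        obtain ⟨ia₁, hp₁⟩ := hpick_dom j₁ hj₁
        obtain ⟨ia₂, hp₂⟩ := hpick_dom j₂ hj₂
        have hs₁ := hpick_some σ j₁ (hdomJ hj₁) ia₁ hp₁
        have hs₂ := hpick_some σ j₂ (hdomJ hj₂) ia₂ hp₂
        have hidx₁ : schurIdx I J σ j₁ = ia₁.1 := by unfold schurIdx; rw [hp₁]; rfl
        have hidx₂ : schurIdx I J σ j₂ = ia₂.1 := by unfold schurIdx; rw [hp₂]; rfl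
        have hia : ia₁ = ia₂ := Subtype.ext (by rw [← hidx₁, ← hidx₂, heq])
        have h2 : σ.symm (Sum.inr ⟨j₁, hdomJ hj₁⟩) = σ.symm (Sum.inr ⟨j₂, hdomJ hj₂⟩) := by
          rw [hs₁, hs₂, hia]
        have h3 := σ.symm.injective h2
        simpa using h3
      · intro k hk; exact Finset.mem_image.1 hk
      · intro j hj
        obtain ⟨ia, hp⟩ := hpick_dom j hj
        have hidx : schurIdx I J σ j = ia.1 := by unfold schurIdx; rw [hp]; rfl
        unfold schurY; rw [hp, hidx]; rfl
    have e3 : radE img (fun i => (A * wt σ) • w i) = |A * wt σ| * radE img w :=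
      radE_smul _ _ _
    have hc0 : 0 ≤ A * wt σ := mul_nonneg hA0.le (hwt0 σ)
    calc radE J (G σ)
        = radE (Finset.univ : Finset (Fin J.card))
          (fun p => (α (schurIdx I J σ ((e.symm p : {j // j ∈ J}) : ℤ))
              ((e.symm p : {j // j ∈ J}) : ℤ))⁻¹ •
            T (schurIdx I J σ ((e.symm p : {j // j ∈ J}) : ℤ)) ((e.symm p : {j // j ∈ J}) : ℤ)
              (schurY I J σ (A * wt σ) w ((e.symm p : {j // j ∈ J}) : ℤ))) := hL.symm
      _ ≤ CR * radE (Finset.univ : Finset (Fin J.card))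
            (fun p => schurY I J σ (A * wt σ) w ((e.symm p : {j // j ∈ J}) : ℤ)) := h1
      _ = CR * radE J (schurY I J σ (A * wt σ) w) := by rw [hLy]
      _ = CR * (|A * wt σ| * radE img w) := by rw [e1, e2, e3]
      _ ≤ CR * ((A * wt σ) * CDx) := by
          rw [abs_of_nonneg hc0]
          exact mul_le_mul_of_nonneg_left
            (mul_le_mul_of_nonneg_left (hw img) hc0) hCR
  -- put everything together
  calc radE J (fun j => ∑ i ∈ I, T i j (w i))
      = radE J (fun j => ∑ σ : Equiv.Perm ({i // i ∈ I} ⊕ {j // j ∈ J}), G σ j) :=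
        radE_congr _ _ _ hdec
    _ ≤ ∑ σ : Equiv.Perm ({i // i ∈ I} ⊕ {j // j ∈ J}), radE J (G σ) := radE_sum_le _ _ _
    _ ≤ ∑ σ : Equiv.Perm ({i // i ∈ I} ⊕ {j // j ∈ J}), CR * ((A * wt σ) * CDx) :=
        Finset.sum_le_sum fun σ _ => hper σ
    _ = A * CR * CDx := by
        have hrw : ∀ σ : Equiv.Perm ({i // i ∈ I} ⊕ {j // j ∈ J}),
            CR * ((A * wt σ) * CDx) = (A * CR * CDx) * wt σ := fun σ => by ring
        rw [Finset.sum_congr rfl fun σ _ => hrw σ, ← Finset.mul_sum, hwt1, mul_one]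

/-- Vector-valued Schur estimate: with `𝒴, 𝒵` of finite cotype, Schur-summable weights
`α(i,j)`, an `R`-bounded family `{α(i,j)⁻¹ T_{i,j}}` and operators `D_i` satisfying a
randomized bound `E‖∑ ε_i D_i x‖ ≲ ‖x‖`, one has `E‖∑_{i,j} ε_j T_{i,j} D_i x‖ ≲ ‖x‖`. -/
theorem vector_valued_schur_estimate
    {𝒳 𝒴 𝒵 : Type*} [NormedAddCommGroup 𝒳] [NormedSpace ℝ 𝒳]
    [NormedAddCommGroup 𝒴] [NormedSpace ℝ 𝒴]
    [NormedAddCommGroup 𝒵] [NormedSpace ℝ 𝒵]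
    -- 𝒴 and 𝒵 have finite cotype
    (hcoY : ∃ (s C : ℝ), 2 ≤ s ∧ 0 < C ∧ ∀ (N : ℕ) (y : Fin N → 𝒴),
      (∑ j, ‖y j‖ ^ s) ^ (1 / s) ≤ C * radE Finset.univ y)
    (hcoZ : ∃ (s C : ℝ), 2 ≤ s ∧ 0 < C ∧ ∀ (N : ℕ) (z : Fin N → 𝒵),
      (∑ j, ‖z j‖ ^ s) ^ (1 / s) ≤ C * radE Finset.univ z)
    (α : ℤ → ℤ → ℝ) (hαpos : ∀ i j, 0 < α i j)
    (A : ℝ) (hα₁ : ∀ i, ∀ J : Finset ℤ, ∑ j ∈ J, α i j ≤ A)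
    (hα₂ : ∀ j, ∀ I : Finset ℤ, ∑ i ∈ I, α i j ≤ A)
    (T : ℤ → ℤ → 𝒴 →L[ℝ] 𝒵)
    (CR : ℝ) (hR : ∀ (N : ℕ) (idx : Fin N → ℤ × ℤ) (y : Fin N → 𝒴),
      radE Finset.univ (fun j => (α (idx j).1 (idx j).2)⁻¹ • T (idx j).1 (idx j).2 (y j))
        ≤ CR * radE Finset.univ y)
    (D : ℤ → 𝒳 →L[ℝ] 𝒴)
    (CD : ℝ) (hD : ∀ (I : Finset ℤ) (x : 𝒳), radE I (fun i => D i x) ≤ CD * ‖x‖) :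
    ∃ C : ℝ, 0 < C ∧ ∀ (I J : Finset ℤ) (x : 𝒳),
      radE J (fun j => ∑ i ∈ I, T i j (D i x)) ≤ C * ‖x‖ := by
  have hA0 : 0 < A := lt_of_lt_of_le (hαpos 0 0) (by simpa using hα₁ 0 {0})
  have hR' : ∀ (N : ℕ) (idx : Fin N → ℤ × ℤ) (y : Fin N → 𝒴),
      radE Finset.univ (fun j => (α (idx j).1 (idx j).2)⁻¹ • T (idx j).1 (idx j).2 (y j))
        ≤ max CR 0 * radE Finset.univ y := fun N idx y =>
    (hR N idx y).trans (mul_le_mul_of_nonneg_right (le_max_left _ _) (radE_nonneg _ _))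
  refine ⟨A * max CR 0 * max CD 0 + 1, ?_, fun I J x => ?_⟩
  · have h0 : 0 ≤ A * max CR 0 * max CD 0 :=
      mul_nonneg (mul_nonneg hA0.le (le_max_right CR 0)) (le_max_right CD 0)
    linarith
  · have hw : ∀ I' : Finset ℤ, radE I' (fun i => D i x) ≤ max CD 0 * ‖x‖ := fun I' =>
      (hD I' x).trans (mul_le_mul_of_nonneg_right (le_max_left _ _) (norm_nonneg x))
    have key := schur_key α hαpos A hA0 hα₁ hα₂ T (max CR 0) (le_max_right CR 0) hR'
      (fun i => D i x) (max CD 0 * ‖x‖)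
      (mul_nonneg (le_max_right CD 0) (norm_nonneg x)) hw I J
    calc radE J (fun j => ∑ i ∈ I, T i j (D i x))
        ≤ A * max CR 0 * (max CD 0 * ‖x‖) := key
      _ = (A * max CR 0 * max CD 0) * ‖x‖ := by ring
      _ ≤ (A * max CR 0 * max CD 0 + 1) * ‖x‖ := by
          have := norm_nonneg x
          nlinarith
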